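/- Let G be a complete multi-partite graph and c an edge-coloring of G with no rainbow K_k using the maximum possible number of colors. Then any two vertices x, y lying in a common partite set satisfy d^s(x) = d^s(y), where d^s(v) is the number of colors saturated by v. -/

import Mathlib

open Classical

noncomputable section

/-- A rainbow `k`-clique in the edge-colored graph `G^c`. -/
def HasRainbowClique {V : Type*} (G : SimpleGraph V) (c : Sym2 V → ℕ) (k : ℕ) : Prop :=
  ∃ S : Finset V, S.card = k ∧ (∀ x ∈ S, ∀ y ∈ S, x ≠ y → G.Adj x y) ∧
    ∀ x ∈ S, ∀ y ∈ S, ∀ z ∈ S, ∀ w ∈ S,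
      x ≠ y → z ≠ w → c s(x, y) = c s(z, w) → s(x, y) = s(z, w)

/-- The number of colors used on the edges of `G`. -/
noncomputable def ncolors {V : Type*} (G : SimpleGraph V) (c : Sym2 V → ℕ) : ℕ :=
  (c '' G.edgeSet).ncard

/-- The anti-Ramsey number `ar(G, K_k)`: the maximum number of colors of an
edge-coloring of `G` without a rainbow `K_k`. -/
noncomputable def antiRamsey {V : Type*} (G : SimpleGraph V) (k : ℕ) : ℕ :=
  sSup {m | ∃ c : Sym2 V → ℕ, ¬ HasRainbowClique G c k ∧ ncolors G c = m}

/-- A color `a` is saturated by the vertex `x`: some edge has color `a` and every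
edge of color `a` is incident to `x`. -/
def Saturates {V : Type*} (G : SimpleGraph V) (c : Sym2 V → ℕ) (x : V) (a : ℕ) : Prop :=
  (∃ e ∈ G.edgeSet, c e = a) ∧ ∀ e ∈ G.edgeSet, c e = a → x ∈ e

/-- The set of colors saturated by `x`. -/
def satColors {V : Type*} (G : SimpleGraph V) (c : Sym2 V → ℕ) (x : V) : Set ℕ :=
  {a | Saturates G c x a}

/-- The saturated color degree `d^s(x)`. -/
noncomputable def satDegree {V : Type*} (G : SimpleGraph V) (c : Sym2 V → ℕ) (x : V) : ℕ :=
  (satColors G c x).ncard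

/-- The complete multipartite graph `K_{n 0, …, n (r-1)}` with partite sets
`U_i = {i} × Fin (n i)`. -/
def KMP (r : ℕ) (n : ℕ → ℕ) : SimpleGraph (Σ i : Fin r, Fin (n i)) :=
  SimpleGraph.completeMultipartiteGraph (fun i : Fin r => Fin (n i))

/-- Auxiliary: recoloring of the edge from `y` to `z`, copying the color of the
edge `xz`, shifted to a fresh color when that color is saturated by `x`. -/
noncomputable def gfun {V : Type*} (G : SimpleGraph V) (c : Sym2 V → ℕ) (x : V) (M : ℕ)
    (z : V) : ℕ :=
  if Saturates G c x (c s(x, z)) then c s(x, z) + M + 1 else c s(x, z)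

/-- Auxiliary: the recoloring that replaces the colors of edges at `y` by (shifted)
copies of the corresponding colors at `x`. -/
noncomputable def recol {V : Type*} (G : SimpleGraph V) (c : Sym2 V → ℕ) (x y : V) (M : ℕ) :
    Sym2 V → ℕ :=
  Sym2.lift ⟨fun u v => if u = y then gfun G c x M v else if v = y then gfun G c x M u
      else c s(u, v), by
    intro u v
    by_cases hu : u = y <;> by_cases hv : v = y <;> simp [hu, hv, Sym2.eq_swap]⟩

lemma recol_left {V : Type*} (G : SimpleGraph V) (c : Sym2 V → ℕ) (x y : V) (M : ℕ) (z : V) :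
    recol G c x y M s(y, z) = gfun G c x M z := by
  rw [recol, Sym2.lift_mk]
  exact if_pos rfl

lemma recol_not_mem {V : Type*} (G : SimpleGraph V) (c : Sym2 V → ℕ) (x y : V) (M : ℕ)
    (e : Sym2 V) (h : y ∉ e) : recol G c x y M e = c e := by
  induction e with
  | _ u v =>
    rw [Sym2.mem_iff] at h
    push_neg at h
    rw [recol, Sym2.lift_mk]
    simp only [if_neg (fun hh : u = y => h.1 hh.symm), if_neg (fun hh : v = y => h.2 hh.symm)]

lemma satDegree_le_of_same_part (r : ℕ) (n : ℕ → ℕ) (k : ℕ)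
    (c : Sym2 (Σ i : Fin r, Fin (n i)) → ℕ)
    (hnr : ¬ HasRainbowClique (KMP r n) c k)
    (hmax : ncolors (KMP r n) c = antiRamsey (KMP r n) k)
    (x y : Σ i : Fin r, Fin (n i)) (hxy : x.1 = y.1) :
    satDegree (KMP r n) c x ≤ satDegree (KMP r n) c y := by
  by_contra hlt
  push_neg at hlt
  set G := KMP r n with hG
  have hadj : ∀ u v : (Σ i : Fin r, Fin (n i)), G.Adj u v ↔ u.1 ≠ v.1 := fun u v => Iff.rfl
  have hne : x ≠ y := by
    rintro rfl; exact absurd hlt (lt_irrefl _)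
  set N : Set ℕ := c '' G.edgeSet with hN
  have hNfin : N.Finite := Set.Finite.image c (Set.toFinite _)
  set M := sSup N with hM
  have hMle : ∀ b ∈ N, b ≤ M := fun b hb => le_csSup hNfin.bddAbove hb
  have hfreshN : ∀ a : ℕ, a + M + 1 ∉ N := fun a ha => by
    have := hMle _ ha; omega
  set c' := recol G c x y M with hc'
  have hSxN : satColors G c x ⊆ N := by
    rintro a ⟨⟨e, he, hce⟩, -⟩; exact ⟨e, he, hce⟩
  have hSyN : satColors G c y ⊆ N := by
    rintro a ⟨⟨e, he, hce⟩, -⟩; exact ⟨e, he, hce⟩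
  -- the new coloring has no rainbow clique
  have hno : ¬ HasRainbowClique G c' k := by
    rintro ⟨S, hScard, hSclq, hSrb⟩
    by_cases hyS : y ∈ S
    · -- y ∈ S : replace y by x
      have hxS : x ∉ S := fun hxS => (hadj x y).mp (hSclq x hxS y hyS hne) hxy
      set S' : Finset _ := insert x (S.erase y) with hS'
      have hxe : x ∉ S.erase y := fun h => hxS (Finset.mem_of_mem_erase h)
      have hcard' : S'.card = k := by
        have hk : 1 ≤ k := hScard ▸ Finset.card_pos.mpr ⟨y, hyS⟩
        rw [hS', Finset.card_insert_of_notMem hxe, Finset.card_erase_of_mem hyS, hScard]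
        omega
      have hmem : ∀ u ∈ S', u = x ∨ (u ∈ S ∧ u ≠ y ∧ u ≠ x) := by
        intro u hu
        rcases Finset.mem_insert.mp hu with h | h
        · exact Or.inl h
        · exact Or.inr ⟨Finset.mem_of_mem_erase h, Finset.ne_of_mem_erase h,
            fun hh => hxe (hh ▸ h)⟩
      have hclq' : ∀ u ∈ S', ∀ v ∈ S', u ≠ v → G.Adj u v := by
        intro u hu v hv huv
        rcases hmem u hu with rfl | ⟨huS, huy, hux⟩
        · rcases hmem v hv with rfl | ⟨hvS, hvy, hvx⟩
          · exact absurd rfl huv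
          · refine (hadj _ _).mpr ?_
            rw [hxy]
            exact (hadj _ _).mp (hSclq y hyS v hvS (Ne.symm hvy))
        · rcases hmem v hv with rfl | ⟨hvS, hvy, hvx⟩
          · refine (hadj _ _).mpr ?_
            rw [hxy]
            exact Ne.symm ((hadj _ _).mp (hSclq y hyS u huS (Ne.symm huy)))
          · exact hSclq u huS v hvS huv
      have hkey : ∀ u ∈ S', ∀ v ∈ S', u ≠ v → x ∈ s(u, v) →
          ∃ p, p ∈ S.erase y ∧ s(u, v) = s(x, p) := by
        intro u hu v hv huv hx
        rcases Sym2.mem_iff.mp hx with h | h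
        · rcases hmem v hv with rfl | ⟨hvS, hvy, hvx⟩
          · exact absurd h.symm huv
          · exact ⟨v, Finset.mem_erase.mpr ⟨hvy, hvS⟩, by rw [h]⟩
        · rcases hmem u hu with rfl | ⟨huS, huy, hux⟩
          · exact absurd h huv
          · refine ⟨u, Finset.mem_erase.mpr ⟨huy, huS⟩, ?_⟩
            rw [← h, Sym2.eq_swap]
      have hrb' : ∀ u ∈ S', ∀ v ∈ S', ∀ z ∈ S', ∀ w ∈ S', u ≠ v → z ≠ w →
          c s(u, v) = c s(z, w) → s(u, v) = s(z, w) := by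
        intro u hu v hv z hz w hw huv hzw hcc
        by_cases hsat : Saturates G c x (c s(u, v))
        · -- saturated case: both edges pass through x
          have hx1 : x ∈ s(u, v) :=
            hsat.2 _ (G.mem_edgeSet.mpr (hclq' u hu v hv huv)) rfl
          have hx2 : x ∈ s(z, w) :=
            hsat.2 _ (G.mem_edgeSet.mpr (hclq' z hz w hw hzw)) hcc.symm
          obtain ⟨p, hp, hep⟩ := hkey u hu v hv huv hx1
          obtain ⟨q, hq, heq⟩ := hkey z hz w hw hzw hx2
          have hcp : c s(x, p) = c s(u, v) := by rw [← hep]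
          have hcq : c s(x, q) = c s(u, v) := by rw [← heq, ← hcc]
          have hgp : c' s(y, p) = c s(u, v) + M + 1 := by
            rw [hc', recol_left]
            simp only [gfun, hcp, if_pos hsat]
          have hgq : c' s(y, q) = c s(u, v) + M + 1 := by
            rw [hc', recol_left]
            simp only [gfun, hcq, if_pos hsat]
          have hpy : p ≠ y := Finset.ne_of_mem_erase hp
          have hqy : q ≠ y := Finset.ne_of_mem_erase hq
          have heqpq := hSrb y hyS p (Finset.mem_of_mem_erase hp) y hyS q
            (Finset.mem_of_mem_erase hq) (Ne.symm hpy) (Ne.symm hqy) (by rw [hgp, hgq])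
          have hpq : p = q := by
            rcases Sym2.eq_iff.mp heqpq with ⟨-, h⟩ | ⟨h1, h2⟩
            · exact h
            · exact absurd h2 hpy
          rw [hep, heq, hpq]
        · -- unsaturated case: move the edges via the swap of x and y
          set φ : (Σ i : Fin r, Fin (n i)) ≃ (Σ i : Fin r, Fin (n i)) := Equiv.swap x y with hφ
          have hφS : ∀ u ∈ S', φ u ∈ S := by
            intro u hu
            rcases hmem u hu with rfl | ⟨huS, huy, hux⟩
            · rw [hφ, Equiv.swap_apply_left]; exact hyS
            · rw [hφ, Equiv.swap_apply_of_ne_of_ne hux huy]; exact huS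
          have hval : ∀ u ∈ S', ∀ v ∈ S', u ≠ v → ¬ Saturates G c x (c s(u, v)) →
              c' s(φ u, φ v) = c s(u, v) := by
            intro u hu v hv huv hns
            rcases hmem u hu with rfl | ⟨huS, huy, hux⟩
            · rcases hmem v hv with rfl | ⟨hvS, hvy, hvx⟩
              · exact absurd rfl huv
              · rw [hφ, Equiv.swap_apply_left, Equiv.swap_apply_of_ne_of_ne hvx hvy, hc',
                  recol_left]
                simp only [gfun, if_neg hns]
            · rcases hmem v hv with h | ⟨hvS, hvy, hvx⟩
              · rw [h] at hns ⊢
                rw [hφ, Equiv.swap_apply_left, Equiv.swap_apply_of_ne_of_ne hux huy, hc',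
                  show s(u, y) = s(y, u) from Sym2.eq_swap, recol_left]
                have hsw : c s(x, u) = c s(u, x) := congrArg c Sym2.eq_swap
                simp only [gfun, hsw, if_neg hns]
              · rw [hφ, Equiv.swap_apply_of_ne_of_ne hux huy,
                  Equiv.swap_apply_of_ne_of_ne hvx hvy, hc']
                refine recol_not_mem _ _ _ _ _ _ ?_
                rw [Sym2.mem_iff]
                push_neg
                exact ⟨fun h => huy h.symm, fun h => hvy h.symm⟩
          have hsat2 : ¬ Saturates G c x (c s(z, w)) := by rw [← hcc]; exact hsat
          have h1 : c' s(φ u, φ v) = c' s(φ z, φ w) := by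
            rw [hval u hu v hv huv hsat, hval z hz w hw hzw hsat2, hcc]
          have h2 := hSrb (φ u) (hφS u hu) (φ v) (hφS v hv) (φ z) (hφS z hz) (φ w)
            (hφS w hw) (φ.injective.ne huv) (φ.injective.ne hzw) h1
          rcases Sym2.eq_iff.mp h2 with ⟨ha, hb⟩ | ⟨ha, hb⟩
          · rw [φ.injective ha, φ.injective hb]
          · rw [φ.injective ha, φ.injective hb, Sym2.eq_swap]
      exact hnr ⟨S', hcard', hclq', hrb'⟩
    · -- y ∉ S : S is already rainbow for c
      have hee : ∀ u ∈ S, ∀ v ∈ S, c' s(u, v) = c s(u, v) := by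
        intro u hu v hv
        rw [hc']
        refine recol_not_mem _ _ _ _ _ _ ?_
        rw [Sym2.mem_iff]
        push_neg
        exact ⟨fun h => hyS (h ▸ hu), fun h => hyS (h ▸ hv)⟩
      refine hnr ⟨S, hScard, hSclq, ?_⟩
      intro u hu v hv z hz w hw h1 h2 hcc
      exact hSrb u hu v hv z hz w hw h1 h2
        (by rw [hee u hu v hv, hee z hz w hw]; exact hcc)
  -- the new coloring has many colors
  have hsub : (N \ satColors G c y) ∪ ((fun a => a + M + 1) '' satColors G c x) ⊆
      c' '' G.edgeSet := by
    rintro b (⟨hbN, hbSy⟩ | ⟨a, haSx, rfl⟩)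
    · obtain ⟨e, he, hce⟩ := hbN
      have hex : ∃ e ∈ G.edgeSet, c e = b ∧ y ∉ e := by
        by_contra hcon
        push_neg at hcon
        exact hbSy ⟨⟨e, he, hce⟩, fun e' he' hce' => hcon e' he' hce'⟩
      obtain ⟨e', he', hce', hye'⟩ := hex
      exact ⟨e', he', by rw [hc', recol_not_mem _ _ _ _ _ _ hye', hce']⟩
    · obtain ⟨⟨e, he, hce⟩, hall⟩ := haSx
      have hxe : x ∈ e := hall e he hce
      obtain ⟨z, rfl⟩ := Sym2.mem_iff_exists.mp hxe
      have hadjxz : G.Adj x z := G.mem_edgeSet.mp he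
      have hadjyz : G.Adj y z := (hadj y z).mpr (by rw [← hxy]; exact (hadj x z).mp hadjxz)
      refine ⟨s(y, z), G.mem_edgeSet.mpr hadjyz, ?_⟩
      rw [hc', recol_left]
      simp only [gfun, hce]
      rw [if_pos (show Saturates G c x a from ⟨⟨_, he, hce⟩, hall⟩)]
  have hdisj : Disjoint (N \ satColors G c y) ((fun a => a + M + 1) '' satColors G c x) := by
    rw [Set.disjoint_left]
    rintro b ⟨hbN, -⟩ ⟨a, -, rfl⟩
    exact hfreshN a hbN
  have hfin1 : (N \ satColors G c y).Finite := hNfin.diff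
  have hfin2 : ((fun a => a + M + 1) '' satColors G c x).Finite :=
    (hNfin.subset hSxN).image _
  have hinj : Function.Injective fun a => a + M + 1 := fun a b h => by
    simpa using h
  have hcount : N.ncard - satDegree G c y + satDegree G c x ≤ ncolors G c' := by
    have h1 := Set.ncard_le_ncard hsub (Set.Finite.image _ (Set.toFinite _))
    rw [Set.ncard_union_eq hdisj hfin1 hfin2, Set.ncard_diff hSyN (hNfin.subset hSyN),
      Set.ncard_image_of_injective _ hinj] at h1
    exact h1
  have hle : ncolors G c' ≤ ncolors G c := by
    rw [hmax]
    apply le_csSup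
    · refine ⟨(Set.univ : Set (Sym2 (Σ i : Fin r, Fin (n i)))).ncard, ?_⟩
      rintro m ⟨c2, -, rfl⟩
      exact le_trans (Set.ncard_image_le (Set.toFinite _))
        (Set.ncard_le_ncard (Set.subset_univ _) (Set.toFinite _))
    · exact ⟨c', hno, rfl⟩
  have hSyle : satDegree G c y ≤ N.ncard := Set.ncard_le_ncard hSyN hNfin
  have hNc : ncolors G c = N.ncard := rfl
  omega

/-- In an extremal coloring for `ar(G, K_k)` of a complete multipartite graph `G`,
two vertices of a common partite set have the same saturated color degree. -/
theorem satDegree_eq_of_same_part (r : ℕ) (n : ℕ → ℕ) (k : ℕ)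
    (c : Sym2 (Σ i : Fin r, Fin (n i)) → ℕ)
    (hnr : ¬ HasRainbowClique (KMP r n) c k)
    (hmax : ncolors (KMP r n) c = antiRamsey (KMP r n) k)
    (x y : Σ i : Fin r, Fin (n i)) (hxy : x.1 = y.1) :
    satDegree (KMP r n) c x = satDegree (KMP r n) c y := by
  exact le_antisymm (satDegree_le_of_same_part r n k c hnr hmax x y hxy)
    (satDegree_le_of_same_part r n k c hnr hmax y x hxy.symm)
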